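/- arXiv:1010.3642 — 3 statements merged into one kernel-verified Lean document; each statement's English description precedes it below -/
import Mathlib

section
/- Let f₁(v) = 2√π·√v (the isoperimetric profile of the Euclidean plane ℝ²) and f₂(v) = √(v(4π − v)) for v ∈ [0, 4π] (the isoperimetric profile of the unit round sphere S²). Define I_P(v) = inf { v₁·f₂(v₂) + v₂·f₁(v₁) : v₁ > 0, 0 < v₂ < 4π, v₁·v₂ = v }. Then for all v ≥ 16, I_P(v) ≥ 4π·√v. -/
open Real

lemma stmt_1_keyS (s : ℝ) (h0 : 0 < s) (h1 : s < 1) : π^2 * (s^2*(1-s)) ≤ 1 + s := by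
  have hπ1 : π < 3.15 := pi_lt_d2
  have hπ2 : 0 < π := pi_pos
  have h10 : π^2 ≤ 9.9225 := by nlinarith
  have hq : (0:ℝ) ≤ 9.9225*s^3 - 9.9225*s^2 + s + 1 := by
    nlinarith [sq_nonneg (s - 0.61), mul_nonneg (sq_nonneg (s - 0.61)) h0.le, sq_nonneg s,
      mul_nonneg (sq_nonneg (s-0.61)) (sub_pos.mpr h1).le]
  nlinarith [mul_nonneg (mul_nonneg (sq_nonneg s) (sub_pos.mpr h1).le)
    (by nlinarith : (0:ℝ) ≤ 9.9225 - π^2)]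

lemma stmt_1_key (b p : ℝ) (hb : 0 < b) (hbp : b < 2*p) (hp : p^2 = π) :
    p^2*b^2*(2*p-b) ≤ 4*(2*p+b) := by
  have hp0 : 0 < p := by linarith
  have hs := stmt_1_keyS (b/(2*p)) (by positivity) (by rw [div_lt_one (by positivity)]; linarith)
  have hp4 : p^4 = π^2 := by rw [← hp]; ring
  have h2p : (2*p) ≠ 0 := by positivity
  field_simp at hs
  rw [← hp4] at hs
  nlinarith [hs, pow_pos hp0 3, pow_pos hp0 5, mul_pos (pow_pos hp0 3) hb]

lemma stmt_1_main (v v₁ v₂ : ℝ) (hv : 16 ≤ v) (h1 : 0 < v₁) (h2 : 0 < v₂)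
    (h3 : v₂ < 4 * π) (h4 : v₁ * v₂ = v) :
    4 * π * Real.sqrt v ≤ v₁ * Real.sqrt (v₂ * (4 * π - v₂)) + v₂ * (2 * Real.sqrt π * Real.sqrt v₁) := by
  set a := Real.sqrt v₁ with ha
  set b := Real.sqrt v₂ with hb
  set c := Real.sqrt (4 * π - v₂) with hc
  set p := Real.sqrt π with hp
  have hπ : 0 < π := pi_pos
  have ha2 : a^2 = v₁ := Real.sq_sqrt h1.le
  have hb2 : b^2 = v₂ := Real.sq_sqrt h2.le
  have hc2 : c^2 = 4*π - v₂ := Real.sq_sqrt (by linarith)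
  have hp2 : p^2 = π := Real.sq_sqrt hπ.le
  have ha0 : 0 < a := Real.sqrt_pos.mpr h1
  have hb0 : 0 < b := Real.sqrt_pos.mpr h2
  have hc0 : 0 ≤ c := Real.sqrt_nonneg _
  have hp0 : 0 < p := Real.sqrt_pos.mpr hπ
  have hbp : b < 2*p := by nlinarith
  have hsv : Real.sqrt v = a * b := by rw [← h4]; exact Real.sqrt_mul h1.le v₂
  have hsbc : Real.sqrt (v₂ * (4*π - v₂)) = b * c := Real.sqrt_mul h2.le _
  have hab4 : 4 ≤ a * b := by
    rw [← hsv]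
    rw [show (4:ℝ) = Real.sqrt 16 by rw [show (16:ℝ) = 4^2 by norm_num, Real.sqrt_sq (by norm_num)]]
    exact Real.sqrt_le_sqrt hv
  have hk := stmt_1_key b p hb0 hbp hp2
  have hsq : (2*p*b*(2*p-b))^2 ≤ (4*c)^2 := by
    nlinarith [hk, mul_pos hb0 (sub_pos.mpr hbp), sub_pos.mpr hbp]
  have h4c : 2*p*b*(2*p-b) ≤ 4*c := by nlinarith [hsq, hc0]
  rw [hsv, hsbc]
  have goal' : 4*p^2*(a*b) ≤ a^2*(b*c) + b^2*(2*p*a) := by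
    nlinarith [mul_nonneg (sub_nonneg.mpr hab4) hc0, mul_le_mul_of_nonneg_left h4c ha0.le,
      mul_pos ha0 hb0]
  calc 4*π*(a*b) = 4*p^2*(a*b) := by rw [hp2]
    _ ≤ a^2*(b*c) + b^2*(2*p*a) := goal'
    _ = v₁*(b*c) + v₂*(2*p*a) := by rw [ha2, hb2]

theorem stmt_1 (v : ℝ) (hv : 16 ≤ v) :
    sInf {w : ℝ | ∃ v₁ v₂ : ℝ, 0 < v₁ ∧ 0 < v₂ ∧ v₂ < 4 * π ∧ v₁ * v₂ = v ∧
      w = v₁ * Real.sqrt (v₂ * (4 * π - v₂)) + v₂ * (2 * Real.sqrt π * Real.sqrt v₁)}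
      ≥ 4 * π * Real.sqrt v := by
  have hπ : 0 < π := pi_pos
  apply le_csInf
  · refine ⟨_, v/(2*π), 2*π, by positivity, by positivity, by linarith, by field_simp, rfl⟩
  · rintro w ⟨v₁, v₂, h1, h2, h3, h4, rfl⟩
    exact stmt_1_main v v₁ v₂ hv h1 h2 h3 h4
end

section
/- The function V(x) = Vol(Ω²_{1/x}) given by V(x) = 4π h·((2+h²)/(1+h²)^{3/2}·log((√(1+h²)+1)/(√(1+h²)−1)) − 2/(1+h²)) with h = 1/x has Taylor expansion V(x) = (32/3)π x³ − (256/15)π x⁵ + (768/35)π x⁷ − (8192/315)π x⁹ + o(x¹⁰) as x → 0⁺. -/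
open Real Asymptotics Filter

set_option maxHeartbeats 1000000

private lemma qnonneg (c : ℝ) (h0 : 0 ≤ c) (h1 : c ≤ 1) :
    (0:ℝ) ≤ 1 - c^2/2 + 3*c^4/8 - 5*c^6/16 + 35*c^8/128 := by
  nlinarith [pow_le_one₀ h0 h1 (n := 2), pow_le_one₀ h0 h1 (n := 6),
    pow_nonneg h0 4, pow_nonneg h0 8]

private lemma rbound (c : ℝ) (h0 : 0 ≤ c) (h1 : c ≤ 1) :
    |(-(63/128) + 105/512*c^2 - 135/1024*c^4 + 1575/16384*c^6 - 1225/16384*c^8 : ℝ)| ≤ 2 := by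
  rw [abs_le]
  constructor <;>
  nlinarith [pow_le_one₀ h0 h1 (n := 2), pow_le_one₀ h0 h1 (n := 4),
    pow_le_one₀ h0 h1 (n := 6), pow_le_one₀ h0 h1 (n := 8),
    pow_nonneg h0 2, pow_nonneg h0 4, pow_nonneg h0 6, pow_nonneg h0 8]

private lemma Ebound (c : ℝ) (h0 : 0 < c) (h1 : c < 1) :
    |(Real.sqrt (1+c^2))⁻¹ - (1 - c^2/2 + 3*c^4/8 - 5*c^6/16 + 35*c^8/128)| ≤ 2 * c^10 := by
  have hu2 : (Real.sqrt (1+c^2))^2 = 1 + c^2 := Real.sq_sqrt (by positivity)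
  have hu1 : (1:ℝ) ≤ Real.sqrt (1+c^2) := by
    nlinarith [hu2, Real.sqrt_nonneg (1+c^2), sq_nonneg c]
  set u := Real.sqrt (1 + c^2) with hu
  have hupos : (0:ℝ) < u := lt_of_lt_of_le one_pos hu1
  have hq0 : (0:ℝ) ≤ 1 - c^2/2 + 3*c^4/8 - 5*c^6/16 + 35*c^8/128 := qnonneg c h0.le h1.le
  set q : ℝ := 1 - c^2/2 + 3*c^4/8 - 5*c^6/16 + 35*c^8/128 with hqdef
  have hden : (1:ℝ) ≤ u * (1 + q * u) := by nlinarith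
  have hmul : (u⁻¹ - q) * (u * (1 + q*u)) = 1 - q^2*(1+c^2) := by
    have h : (u⁻¹ - q) * (u * (1 + q*u)) = (1 - q*u) * (1 + q*u) := by
      field_simp
    rw [h]
    linear_combination (-(q^2)) * hu2
  have key : u⁻¹ - q = (1 - q^2*(1+c^2)) / (u * (1 + q*u)) := by
    rw [eq_div_iff (by positivity), hmul]
  have hnum : 1 - q^2*(1+c^2) = c^10 * (-(63/128) + 105/512*c^2 - 135/1024*c^4
      + 1575/16384*c^6 - 1225/16384*c^8) := by rw [hqdef]; ring
  rw [key, abs_div, abs_of_pos (by positivity : (0:ℝ) < u * (1+q*u))]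
  have hd1 : |1 - q^2*(1+c^2)| / (u*(1+q*u)) ≤ |1 - q^2*(1+c^2)| :=
    div_le_self (abs_nonneg _) hden
  refine hd1.trans ?_
  rw [hnum, abs_mul, abs_pow, abs_of_nonneg h0.le]
  have hr := rbound c h0.le h1.le
  have h10 : (0:ℝ) ≤ c^10 := pow_nonneg h0.le 10
  nlinarith

private lemma arsinh_taylor (x : ℝ) (hx0 : 0 < x) (hx1 : x < 1) :
    |Real.arsinh x - (x - x^3/6 + 3*x^5/40 - 5*x^7/112 + 35*x^9/1152)| ≤ 2 * x^11 := by
  set g : ℝ → ℝ := fun y => Real.arsinh y - (y - y^3/6 + 3*y^5/40 - 5*y^7/112 + 35*y^9/1152)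
    with hg
  have hd : ∀ y : ℝ, HasDerivAt g
      ((Real.sqrt (1+y^2))⁻¹ - (1 - y^2/2 + 3*y^4/8 - 5*y^6/16 + 35*y^8/128)) y := by
    intro y
    have h2 : HasDerivAt (fun y:ℝ => y - y^3/6 + 3*y^5/40 - 5*y^7/112 + 35*y^9/1152)
        (1 - y^2/2 + 3*y^4/8 - 5*y^6/16 + 35*y^8/128) y := by
      have h := ((((hasDerivAt_id' (x := y)).sub ((hasDerivAt_pow 3 y).div_const 6)).add
        (((hasDerivAt_pow 5 y).const_mul (3:ℝ)).div_const 40)).sub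
        (((hasDerivAt_pow 7 y).const_mul (5:ℝ)).div_const 112)).add
        (((hasDerivAt_pow 9 y).const_mul (35:ℝ)).div_const 1152)
      refine h.congr_deriv ?_
      push_cast
      ring
    exact (Real.hasDerivAt_arsinh y).sub h2
  have hcont : ContinuousOn g (Set.Icc 0 x) := fun y _ => (hd y).continuousAt.continuousWithinAt
  obtain ⟨c, hc, hceq⟩ := exists_hasDerivAt_eq_slope g _ hx0 hcont (fun y _ => hd y)
  have hg0 : g 0 = 0 := by simp [hg]
  have hgx : g x = ((Real.sqrt (1+c^2))⁻¹ - (1 - c^2/2 + 3*c^4/8 - 5*c^6/16 + 35*c^8/128)) * x := by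
    rw [hceq, hg0]
    field_simp
    rw [sub_zero, sub_zero, mul_div_assoc, div_self hx0.ne', mul_one]
  obtain ⟨hc0, hcx⟩ := hc
  have hEc := Ebound c hc0 (hcx.trans hx1)
  have hfinal : |g x| ≤ 2 * x^11 := by
    rw [hgx, abs_mul, abs_of_pos hx0]
    have hc10 : c^10 ≤ x^10 := pow_le_pow_left₀ hc0.le hcx.le 10
    calc |(Real.sqrt (1+c^2))⁻¹ - (1 - c^2/2 + 3*c^4/8 - 5*c^6/16 + 35*c^8/128)| * x
        ≤ (2*c^10) * x := mul_le_mul_of_nonneg_right hEc hx0.le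
      _ ≤ (2*x^10) * x := by nlinarith
      _ = 2 * x^11 := by ring
  simpa [hg] using hfinal

private lemma identityV (x : ℝ) (hx : 0 < x) :
    4 * π * (1/x) * ((2 + (1/x)^2) / (1 + (1/x)^2) ^ ((3:ℝ)/2) *
      Real.log ((Real.sqrt (1 + (1/x)^2) + 1) / (Real.sqrt (1 + (1/x)^2) - 1))
      - 2 / (1 + (1/x)^2))
    = 8 * π * ((1 + 2*x^2) * Real.arsinh x / (Real.sqrt (1+x^2))^3 - x / (1+x^2)) := by
  have h1x2 : (0:ℝ) < 1 + x^2 := by positivity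
  have hu2 : (Real.sqrt (1+x^2))^2 = 1 + x^2 := Real.sq_sqrt h1x2.le
  set u := Real.sqrt (1+x^2) with hu
  have hupos : 0 < u := Real.sqrt_pos.mpr h1x2
  have hxu : x < u := by nlinarith
  have hsq : 1 + (1/x)^2 = (u/x)^2 := by
    field_simp
    linear_combination -hu2
  have h1 : Real.sqrt (1 + (1/x)^2) = u / x := by
    rw [hsq]
    exact Real.sqrt_sq (by positivity)
  have h2 : (1 + (1/x)^2) ^ ((3:ℝ)/2) = (u/x)^3 := by
    rw [hsq, show ((u/x)^2 : ℝ) = (u/x) ^ (2:ℝ) by rw [← Real.rpow_natCast (u/x) 2]; norm_num,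
      ← Real.rpow_mul (by positivity)]
    rw [show ((2:ℝ) * (3/2)) = ((3:ℕ):ℝ) by norm_num, Real.rpow_natCast]
  have h3 : (Real.sqrt (1 + (1/x)^2) + 1) / (Real.sqrt (1 + (1/x)^2) - 1) = (x+u)^2 := by
    rw [h1]
    have hne : u/x - 1 ≠ 0 := by
      have : 1 < u/x := (one_lt_div hx).mpr hxu
      linarith
    rw [div_eq_iff hne]
    field_simp
    linear_combination (-(x+u)) * hu2
  have h4 : Real.log ((x+u)^2) = 2 * Real.arsinh x := by
    have hxupos : 0 < x + u := by positivity
    rw [Real.log_pow]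
    have : Real.arsinh x = Real.log (x + u) := rfl
    rw [this]
    push_cast
    ring
  rw [h3, h4, h2]
  field_simp
  ring_nf

noncomputable def pA (x : ℝ) : ℝ := x - x^3/6 + 3*x^5/40 - 5*x^7/112 + 35*x^9/1152
noncomputable def wP (x : ℝ) : ℝ := 8*(1+2*x^2)*(pA x)
noncomputable def vP (x : ℝ) : ℝ :=
  8*x + (32/3*x^3 - 256/15*x^5 + 768/35*x^7 - 8192/315*x^9)*(1+x^2)
noncomputable def sP (x : ℝ) : ℝ :=
  59939/126 + 229205/216*x^2 + 79037/432*x^4 - 93307169/1693440*x^6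
  + 160668481/6350400*x^8 - 805091993/907200*x^10 - 67108864/99225*x^12

private lemma hN2 (x u : ℝ) (hu2 : u^2 = 1+x^2) :
    (wP x - vP x * u) * (wP x + vP x * u) = x^12 * sP x := by
  simp only [wP, vP, sP, pA]
  linear_combination (-(8*x + (32/3*x^3 - 256/15*x^5 + 768/35*x^7 - 8192/315*x^9)*(1+x^2))^2) * hu2

private lemma sP_bound (x : ℝ) (h0 : 0 ≤ x) (h1 : x ≤ 1) : |sP x| ≤ 3364 := by
  simp only [sP]
  rw [abs_le]
  constructor <;>
  nlinarith [pow_le_one₀ h0 h1 (n := 2), pow_le_one₀ h0 h1 (n := 4),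
    pow_le_one₀ h0 h1 (n := 6), pow_le_one₀ h0 h1 (n := 8),
    pow_le_one₀ h0 h1 (n := 10), pow_le_one₀ h0 h1 (n := 12),
    pow_nonneg h0 2, pow_nonneg h0 4, pow_nonneg h0 6, pow_nonneg h0 8,
    pow_nonneg h0 10, pow_nonneg h0 12]

private lemma pA_nonneg (x : ℝ) (h0 : 0 ≤ x) (h1 : x ≤ 1) : 0 ≤ pA x := by
  simp only [pA]
  nlinarith [pow_le_one₀ h0 h1 (n := 2), pow_le_one₀ h0 h1 (n := 6),
    pow_nonneg h0 3, pow_nonneg h0 5, pow_nonneg h0 7, pow_nonneg h0 9, sq_nonneg x]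

private lemma vP_lb (x : ℝ) (h0 : 0 ≤ x) (h1 : x ≤ 1/4) : 8*x ≤ vP x := by
  simp only [vP]
  nlinarith [pow_nonneg h0 3, pow_nonneg h0 5, pow_nonneg h0 7, pow_nonneg h0 9,
    pow_le_pow_left₀ h0 h1 2, pow_le_pow_left₀ h0 h1 6, sq_nonneg x, pow_nonneg h0 2]

private lemma main_bound (x : ℝ) (hx0 : 0 < x) (hx4 : x < 1/4) :
    |8 * π * ((1 + 2*x^2) * Real.arsinh x / (Real.sqrt (1+x^2))^3 - x / (1+x^2))
      - ((32/3) * π * x ^ 3 - (256/15) * π * x ^ 5 + (768/35) * π * x ^ 7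
          - (8192/315) * π * x ^ 9)| ≤ 2000 * x^11 := by
  have h1x2 : (0:ℝ) < 1 + x^2 := by positivity
  have hu2 : (Real.sqrt (1+x^2))^2 = 1 + x^2 := Real.sq_sqrt h1x2.le
  have hu1 : (1:ℝ) ≤ Real.sqrt (1+x^2) := by
    nlinarith [Real.sqrt_nonneg (1+x^2), sq_nonneg x]
  set u := Real.sqrt (1+x^2) with hu
  have hupos : (0:ℝ) < u := lt_of_lt_of_le one_pos hu1
  have hu3 : (1:ℝ) ≤ u^3 := one_le_pow₀ hu1
  have hx1 : x < 1 := by linarith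
  have hr : |Real.arsinh x - pA x| ≤ 2 * x^11 := by
    simpa [pA] using arsinh_taylor x hx0 hx1
  have hrepr : 8 * π * ((1 + 2*x^2) * Real.arsinh x / u^3 - x / (1+x^2))
      - ((32/3) * π * x ^ 3 - (256/15) * π * x ^ 5 + (768/35) * π * x ^ 7
          - (8192/315) * π * x ^ 9)
      = 8*π*(1+2*x^2)/u^3 * (Real.arsinh x - pA x) + π * (wP x - vP x * u) / u^3 := by
    have hu3e : u^3 = (1+x^2) * u := by
      rw [pow_succ, hu2]
    rw [hu3e]
    simp only [pA, wP, vP]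
    field_simp
    ring
  rw [hrepr]
  have hb1 : |8*π*(1+2*x^2)/u^3 * (Real.arsinh x - pA x)| ≤ 72 * x^11 := by
    rw [abs_mul]
    have hc : |8*π*(1+2*x^2)/u^3| ≤ 36 := by
      rw [abs_of_pos (by positivity), div_le_iff₀ (by positivity)]
      nlinarith [Real.pi_le_four, Real.pi_pos, sq_nonneg x]
    calc |8*π*(1+2*x^2)/u^3| * |Real.arsinh x - pA x| ≤ 36 * (2*x^11) := by
          apply mul_le_mul hc hr (abs_nonneg _) (by norm_num)
      _ = 72 * x^11 := by ring
  have hwv : |wP x - vP x * u| ≤ 421 * x^11 := by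
    have hw0 : 0 ≤ wP x := by
      simp only [wP]
      have := pA_nonneg x hx0.le hx1.le
      nlinarith [sq_nonneg x]
    have hv : 8*x ≤ vP x := vP_lb x hx0.le hx4.le
    have hvu : 8*x ≤ vP x * u := by nlinarith
    have hsum : 8*x ≤ wP x + vP x * u := by linarith
    have habs : |wP x - vP x * u| * (8*x) ≤ 3364 * x^12 := by
      calc |wP x - vP x * u| * (8*x) ≤ |wP x - vP x * u| * (wP x + vP x * u) :=
            mul_le_mul_of_nonneg_left hsum (abs_nonneg _)
        _ = |(wP x - vP x * u) * (wP x + vP x * u)| := by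
            rw [abs_mul, abs_of_nonneg (by linarith : 0 ≤ wP x + vP x * u)]
        _ = |x^12 * sP x| := by rw [hN2 x u hu2]
        _ ≤ x^12 * 3364 := by
            rw [abs_mul, abs_pow, abs_of_pos hx0]
            exact mul_le_mul_of_nonneg_left (sP_bound x hx0.le hx1.le) (pow_nonneg hx0.le 12)
        _ = 3364 * x^12 := by ring
    have hle : |wP x - vP x * u| ≤ (3364 * x^12) / (8*x) := by
      rw [le_div_iff₀ (by positivity)]
      exact habs
    have h420 : (3364 * x^12) / (8*x) = 420.5 * x^11 := by
      field_simp
      ring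
    rw [h420] at hle
    nlinarith [pow_nonneg hx0.le 11]
  have hb2 : |π * (wP x - vP x * u) / u^3| ≤ 1684 * x^11 := by
    rw [abs_div, abs_mul, abs_of_pos Real.pi_pos, abs_of_pos (by positivity : (0:ℝ) < u^3)]
    have h1 : π * |wP x - vP x * u| / u^3 ≤ π * |wP x - vP x * u| :=
      div_le_self (by positivity) hu3
    refine h1.trans ?_
    nlinarith [Real.pi_le_four, Real.pi_pos, abs_nonneg (wP x - vP x * u), pow_pos hx0 11]
  calc |8*π*(1+2*x^2)/u^3 * (Real.arsinh x - pA x) + π * (wP x - vP x * u) / u^3|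
      ≤ |8*π*(1+2*x^2)/u^3 * (Real.arsinh x - pA x)| + |π * (wP x - vP x * u) / u^3| :=
        abs_add_le _ _
    _ ≤ 72 * x^11 + 1684 * x^11 := add_le_add hb1 hb2
    _ ≤ 2000 * x^11 := by nlinarith [pow_pos hx0 11]

theorem stmt_7 :
    (fun x : ℝ =>
        (4 * π * (1/x) * ((2 + (1/x)^2) / (1 + (1/x)^2) ^ ((3:ℝ)/2) *
          Real.log ((Real.sqrt (1 + (1/x)^2) + 1) / (Real.sqrt (1 + (1/x)^2) - 1))
          - 2 / (1 + (1/x)^2)))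
        - ((32/3) * π * x ^ 3 - (256/15) * π * x ^ 5 + (768/35) * π * x ^ 7
            - (8192/315) * π * x ^ 9))
      =o[nhdsWithin 0 (Set.Ioi 0)] (fun x : ℝ => x ^ 10) := by
  have hO : (fun x : ℝ =>
        (4 * π * (1/x) * ((2 + (1/x)^2) / (1 + (1/x)^2) ^ ((3:ℝ)/2) *
          Real.log ((Real.sqrt (1 + (1/x)^2) + 1) / (Real.sqrt (1 + (1/x)^2) - 1))
          - 2 / (1 + (1/x)^2)))
        - ((32/3) * π * x ^ 3 - (256/15) * π * x ^ 5 + (768/35) * π * x ^ 7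
            - (8192/315) * π * x ^ 9))
      =O[nhdsWithin 0 (Set.Ioi 0)] (fun x : ℝ => x ^ 11) := by
    rw [isBigO_iff]
    refine ⟨2000, ?_⟩
    filter_upwards [Ioo_mem_nhdsGT_of_mem
      (by norm_num : (0:ℝ) ∈ Set.Ico (0:ℝ) (1/4))] with x hx
    obtain ⟨hx0, hx4⟩ := hx
    rw [Real.norm_eq_abs, Real.norm_eq_abs, identityV x hx0, abs_pow, abs_of_pos hx0]
    calc |8 * π * ((1 + 2*x^2) * Real.arsinh x / (Real.sqrt (1+x^2))^3 - x / (1+x^2))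
        - ((32/3) * π * x ^ 3 - (256/15) * π * x ^ 5 + (768/35) * π * x ^ 7
            - (8192/315) * π * x ^ 9)| ≤ 2000 * x^11 := main_bound x hx0 hx4
      _ = 2000 * x^11 := by ring
  exact hO.trans_isLittleO
    ((isLittleO_pow_pow (by norm_num : 10 < 11)).mono nhdsWithin_le_nhds)
end

section
/- For h > 0, the quantities A(h) = 4π·(2/(1+h²) + h²/(1+h²)^{3/2}·log((√(1+h²)+1)/(√(1+h²)−1))) and V(h) = 4πh·((2+h²)/(1+h²)^{3/2}·log((√(1+h²)+1)/(√(1+h²)−1)) − 2/(1+h²)) are both positive, and A(h) < 8π for all sufficiently large h. -/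
open Real Filter

lemma log_lower (t : ℝ) (h0 : 0 < t) (h1 : t < 1) :
    2 * t < Real.log ((1 + t) / (1 - t)) := by
  have h1t : (0:ℝ) < 1 - t := by linarith
  have h1t' : (0:ℝ) < 1 + t := by linarith
  rw [Real.log_div (by positivity) (by positivity)]
  set f : ℝ → ℝ := fun x => Real.log (1 + x) - Real.log (1 - x) - 2 * x with hf
  have hderiv : ∀ x ∈ Set.Ioo (0:ℝ) t,
      HasDerivAt f (1/(1+x) + 1/(1-x) - 2) x := by
    intro x hx
    have hx1 : (0:ℝ) < 1 + x := by linarith [hx.1]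
    have hx2 : (0:ℝ) < 1 - x := by nlinarith [hx.2]
    have d1 : HasDerivAt (fun y : ℝ => Real.log (1 + y)) (1/(1+x)) x := by
      have := ((hasDerivAt_id x).const_add 1).log hx1.ne'
      simpa using this
    have d2 : HasDerivAt (fun y : ℝ => Real.log (1 - y)) (-1/(1-x)) x := by
      have := ((hasDerivAt_id x).const_sub 1).log hx2.ne'
      simpa using this
    have d3 : HasDerivAt (fun y : ℝ => 2 * y) 2 x := by
      simpa using (hasDerivAt_id x).const_mul 2
    have := (d1.sub d2).sub d3
    rw [show (1/(1+x) + 1/(1-x) - 2 : ℝ) = 1/(1+x) - -1/(1-x) - 2 by ring]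
    exact this
  have hc : ContinuousOn f (Set.Icc 0 t) := by
    apply ContinuousOn.sub
    apply ContinuousOn.sub
    · apply ContinuousOn.log ((continuous_const.add continuous_id).continuousOn)
      intro x hx; have := hx.1; simp at *; nlinarith
    · apply ContinuousOn.log ((continuous_const.sub continuous_id).continuousOn)
      intro x hx; have := hx.2; simp at *; nlinarith
    · exact (continuous_const.mul continuous_id).continuousOn
  have hmono : StrictMonoOn f (Set.Icc 0 t) := by
    apply strictMonoOn_of_deriv_pos (convex_Icc 0 t) hc
    intro x hx
    rw [interior_Icc] at hx
    have hx1 : (0:ℝ) < 1 + x := by linarith [hx.1]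
    have hx2 : (0:ℝ) < 1 - x := by nlinarith [hx.2]
    rw [(hderiv x hx).deriv]
    have : 1/(1+x) + 1/(1-x) - 2 = 2*x^2/((1+x)*(1-x)) := by
      field_simp; ring
    rw [this]
    exact div_pos (by nlinarith [hx.1]) (by nlinarith)
  have := hmono (Set.left_mem_Icc.2 h0.le) (Set.right_mem_Icc.2 h0.le) h0
  simp only [hf] at this
  simp at this
  linarith

lemma log_upper (t : ℝ) (h0 : 0 < t) (h1 : t ≤ 1/2) :
    Real.log ((1 + t) / (1 - t)) ≤ 3 * t := by
  have h1t : (0:ℝ) < 1 - t := by linarith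
  rw [Real.log_div (by positivity) (by positivity)]
  have a : Real.log (1 + t) ≤ t := by
    have := Real.log_le_sub_one_of_pos (show (0:ℝ) < 1 + t by linarith)
    linarith
  have b : -Real.log (1 - t) ≤ t / (1 - t) := by
    have := Real.log_le_sub_one_of_pos (show (0:ℝ) < (1 - t)⁻¹ by positivity)
    rw [Real.log_inv] at this
    have e : (1 - t)⁻¹ - 1 = t / (1 - t) := by field_simp; ring
    linarith [e ▸ this]
  have : t / (1 - t) ≤ 2 * t := by
    rw [div_le_iff₀ h1t]; nlinarith
  linarith

lemma setup (h : ℝ) (hs1 : 1 < Real.sqrt (1 + h ^ 2)) :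
    Real.log ((Real.sqrt (1 + h ^ 2) + 1) / (Real.sqrt (1 + h ^ 2) - 1))
      = Real.log ((1 + 1 / Real.sqrt (1 + h ^ 2)) / (1 - 1 / Real.sqrt (1 + h ^ 2))) := by
  set s := Real.sqrt (1 + h ^ 2)
  have hs0 : 0 < s := by linarith
  congr 1
  rw [div_eq_div_iff (by linarith) (by
    have : 1/s < 1 := by rw [div_lt_one hs0]; exact hs1
    linarith)]
  field_simp

theorem stmt_18 :
    (∀ h : ℝ, 0 < h →
        0 < 4 * π * (2 / (1 + h ^ 2) + h ^ 2 / (1 + h ^ 2) ^ ((3:ℝ)/2) *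
          Real.log ((Real.sqrt (1 + h ^ 2) + 1) / (Real.sqrt (1 + h ^ 2) - 1)))
      ∧ 0 < 4 * π * h * ((2 + h ^ 2) / (1 + h ^ 2) ^ ((3:ℝ)/2) *
          Real.log ((Real.sqrt (1 + h ^ 2) + 1) / (Real.sqrt (1 + h ^ 2) - 1))
            - 2 / (1 + h ^ 2)))
    ∧ (∀ᶠ h : ℝ in atTop,
        4 * π * (2 / (1 + h ^ 2) + h ^ 2 / (1 + h ^ 2) ^ ((3:ℝ)/2) *
          Real.log ((Real.sqrt (1 + h ^ 2) + 1) / (Real.sqrt (1 + h ^ 2) - 1))) < 8 * π) := by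
  constructor
  · intro h hh
    set s := Real.sqrt (1 + h ^ 2) with hsdef
    have hs2 : s ^ 2 = 1 + h ^ 2 := Real.sq_sqrt (by positivity)
    have hs0 : 0 ≤ s := Real.sqrt_nonneg _
    have hs1 : 1 < s := by nlinarith
    have hs0' : (0:ℝ) < s := by linarith
    have ht0 : 0 < 1 / s := by positivity
    have ht1 : 1 / s < 1 := by rw [div_lt_one hs0']; exact hs1
    have hpow : (1 + h ^ 2) ^ ((3:ℝ)/2) = s ^ 3 := by
      rw [show ((3:ℝ)/2) = (1/2)*3 by norm_num, Real.rpow_mul (by positivity),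
        ← Real.sqrt_eq_rpow, show ((3:ℝ)) = ((3:ℕ):ℝ) by norm_num, Real.rpow_natCast]
    have hL : 2 * (1 / s) < Real.log ((s + 1) / (s - 1)) := by
      rw [setup h hs1]
      exact log_lower (1/s) ht0 ht1
    have hLpos : 0 < Real.log ((s + 1) / (s - 1)) := by linarith
    constructor
    · rw [hpow]
      have : 0 < 2 / (1 + h ^ 2) + h ^ 2 / s ^ 3 * Real.log ((s + 1) / (s - 1)) :=
        add_pos (by positivity) (mul_pos (by positivity) hLpos)
      have hpi := Real.pi_pos
      nlinarith
    · rw [hpow, ← hs2]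
      have e2 : (2 + (s^2 - 1)) / s ^ 3 * (2 * (1 / s)) - 2 / s ^ 2 = 2 / s ^ 4 := by
        field_simp
        ring
      have h2 : 2 + h ^ 2 = 2 + (s^2 - 1) := by nlinarith
      have e3 : (2 + h ^ 2) / s ^ 3 * (2 * (1 / s)) ≤
          (2 + h ^ 2) / s ^ 3 * Real.log ((s + 1) / (s - 1)) := by
        apply mul_le_mul_of_nonneg_left hL.le
        positivity
      have inner : 0 < (2 + h ^ 2) / s ^ 3 * Real.log ((s + 1) / (s - 1)) - 2 / s ^ 2 := by
        rw [h2] at e3 ⊢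
        have : 0 < 2 / s ^ 4 := by positivity
        linarith [e2 ▸ this]
      exact mul_pos (mul_pos (by positivity) hh) inner
  · filter_upwards [eventually_ge_atTop (2:ℝ)] with h hh
    set s := Real.sqrt (1 + h ^ 2) with hsdef
    have hs2 : s ^ 2 = 1 + h ^ 2 := Real.sq_sqrt (by positivity)
    have hs0 : 0 ≤ s := Real.sqrt_nonneg _
    have hsge : 2 ≤ s := by nlinarith
    have hs0' : (0:ℝ) < s := by linarith
    have hs1 : 1 < s := by linarith
    have ht0 : 0 < 1 / s := by positivity
    have ht1 : 1 / s ≤ 1 / 2 := by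
      apply div_le_div_of_nonneg_left (by norm_num) (by norm_num) hsge
    have hpow : (1 + h ^ 2) ^ ((3:ℝ)/2) = s ^ 3 := by
      rw [show ((3:ℝ)/2) = (1/2)*3 by norm_num, Real.rpow_mul (by positivity),
        ← Real.sqrt_eq_rpow, show ((3:ℝ)) = ((3:ℕ):ℝ) by norm_num, Real.rpow_natCast]
    have hLup : Real.log ((s + 1) / (s - 1)) ≤ 3 * (1 / s) := by
      rw [setup h hs1]
      exact log_upper (1/s) ht0 ht1
    rw [hpow, ← hs2]
    have e1 : h ^ 2 / s ^ 3 * Real.log ((s + 1) / (s - 1)) ≤ h ^ 2 / s ^ 3 * (3 * (1 / s)) :=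
      mul_le_mul_of_nonneg_left hLup (by positivity)
    have e2 : 2 / s ^ 2 + h ^ 2 / s ^ 3 * (3 * (1 / s)) < 2 := by
      rw [show 2 / s ^ 2 + h ^ 2 / s ^ 3 * (3 * (1 / s)) = (2 * s ^ 2 + 3 * h ^ 2) / s ^ 4 by
        field_simp]
      rw [div_lt_iff₀ (by positivity)]
      have hu : 4 ≤ s ^ 2 := by nlinarith
      nlinarith [hu, hs2, sq_nonneg (s^2 - 4)]
    have key : 2 / s ^ 2 + h ^ 2 / s ^ 3 * Real.log ((s + 1) / (s - 1)) < 2 := by linarith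
    have hpi := Real.pi_pos
    nlinarith
end
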